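/- arXiv:2508.02688 — 6 statements merged into one kernel-verified Lean document; each statement's English description precedes it below -/
import Mathlib

section
/- Let β be a non-real complex root of X³ − X² − 1 and set b = β²/(β³ + 2). Then 0.278 < |b| < 0.279. In particular, with a = α²/(α³ + 2) where α is the unique real root of X³ − X² − 1, one has max{|a|, |b|} < 1/2. -/
set_option maxHeartbeats 1000000 in
theorem abs_b_bounds (α : ℝ) (hα : α ^ 3 - α ^ 2 - 1 = 0)
    (β : ℂ) (hβ : β ^ 3 - β ^ 2 - 1 = 0) (hβim : β.im ≠ 0) :
    0.278 < ‖β ^ 2 / (β ^ 3 + 2)‖ ∧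
    ‖β ^ 2 / (β ^ 3 + 2)‖ < 0.279 ∧
    max |α ^ 2 / (α ^ 3 + 2)| (‖β ^ 2 / (β ^ 3 + 2)‖) < 1 / 2 := by
  -- real/imaginary parts of β
  have h1 : (β ^ 3 - β ^ 2 - 1).im = 0 := by rw [hβ]; simp
  have h2 : (β ^ 3 - β ^ 2 - 1).re = 0 := by rw [hβ]; simp
  simp only [pow_succ, pow_zero, one_mul, Complex.mul_im, Complex.mul_re, Complex.sub_im,
    Complex.sub_re, Complex.one_im, Complex.one_re] at h1 h2
  set x := β.re with hxd
  set y := β.im with hyd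
  ring_nf at h1 h2
  -- y^2 = 3x^2 - 2x
  have hy2 : y ^ 2 = 3 * x ^ 2 - 2 * x := by
    have : y * (3 * x ^ 2 - y ^ 2 - 2 * x) = 0 := by ring_nf; linarith [h1]
    rcases mul_eq_zero.mp this with h | h
    · exact absurd h hβim
    · linarith
  -- 8x^3 - 8x^2 + 2x + 1 = 0
  have hx : 8 * x ^ 3 - 8 * x ^ 2 + 2 * x + 1 = 0 := by nlinarith [h2, hy2]
  -- bounds on x
  have hxl : -0.23279 < x := by
    nlinarith [hx, sq_nonneg (x + 0.23279), sq_nonneg (x - 0.4), sq_nonneg x]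
  have hxu : x < -0.23278 := by
    nlinarith [hx, sq_nonneg (x - 0.61639), sq_nonneg (x - 0.6), sq_nonneg x]
  -- rewrite β^3 + 2 = β^2 + 3
  have hcube : β ^ 3 + 2 = β ^ 2 + 3 := by
    have h3 : β ^ 3 = β ^ 2 + 1 := by linear_combination hβ
    rw [h3]; ring
  set A := ‖β ^ 2 / (β ^ 3 + 2)‖ with hAd
  have hA2 : A ^ 2 = (x ^ 2 + y ^ 2) ^ 2 / ((x ^ 2 - y ^ 2 + 3) ^ 2 + (2 * x * y) ^ 2) := by
    rw [hAd, hcube, Complex.sq_norm, Complex.normSq_div, Complex.normSq_apply,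
      Complex.normSq_apply]
    simp only [pow_succ, pow_zero, one_mul, Complex.mul_im, Complex.mul_re, Complex.add_im,
      Complex.add_re, Complex.re_ofNat, Complex.im_ofNat]
    ring_nf
    rfl
  have e1 : (x ^ 2 - y ^ 2 + 3) ^ 2 + (2 * x * y) ^ 2
      = (3 + 2 * x - 2 * x ^ 2) ^ 2 + 4 * x ^ 2 * (3 * x ^ 2 - 2 * x) := by
    linear_combination (4 * x ^ 2 - ((x ^ 2 - y ^ 2 + 3) + (3 + 2 * x - 2 * x ^ 2))) * hy2
  have e2 : (x ^ 2 + y ^ 2) ^ 2 = (4 * x ^ 2 - 2 * x) ^ 2 := by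
    linear_combination ((x ^ 2 + y ^ 2) + (4 * x ^ 2 - 2 * x)) * hy2
  have hDpos : (x ^ 2 - y ^ 2 + 3) ^ 2 + (2 * x * y) ^ 2 > 0 := by
    rw [e1]; nlinarith [hxl, hxu, sq_nonneg (3 + 2 * x - 2 * x ^ 2)]
  have hAnn : 0 ≤ A := norm_nonneg _
  have hblb : (0.278 : ℝ) < A := by
    have h278 : (0.278 : ℝ) ^ 2 < A ^ 2 := by
      rw [hA2, lt_div_iff₀ hDpos, e1, e2]
      nlinarith [mul_nonneg (by linarith : (0:ℝ) ≤ x + 0.23279)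
          (by linarith : (0:ℝ) ≤ -0.23278 - x),
        sq_nonneg (x + 0.232785), sq_nonneg ((x + 0.23279) * (x + 0.23278))]
    nlinarith [h278, hAnn]
  have hbub : A < 0.279 := by
    have h279 : A ^ 2 < (0.279 : ℝ) ^ 2 := by
      rw [hA2, div_lt_iff₀ hDpos, e2, e1]
      nlinarith [mul_nonneg (by linarith : (0:ℝ) ≤ x + 0.23279)
          (by linarith : (0:ℝ) ≤ -0.23278 - x),
        sq_nonneg (x + 0.232785), sq_nonneg ((x + 0.23279) * (x + 0.23278))]
    nlinarith [h279, hAnn]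
  refine ⟨hblb, hbub, ?_⟩
  -- α part
  have hα3 : α ^ 3 = α ^ 2 + 1 := by linarith
  have hαpos : 0 < α := by nlinarith [sq_nonneg α, sq_nonneg (α - 1), sq_nonneg (α + 1)]
  have hαub : α < 1.5 := by nlinarith [sq_nonneg (α - 1.5), sq_nonneg α, sq_nonneg (α - 1)]
  have hden : (0 : ℝ) < α ^ 3 + 2 := by nlinarith
  have ha : |α ^ 2 / (α ^ 3 + 2)| < 1 / 2 := by
    rw [abs_div, abs_of_nonneg (by positivity : (0:ℝ) ≤ α ^ 2), abs_of_pos hden,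
      div_lt_iff₀ hden]
    nlinarith
  exact max_lt ha (by linarith)
end

section
/- For every integer m ≥ 1, |N_m − a·α^m| < 0.558 · α^{−m/2}, where α is the unique real root of X³ − X² − 1 and a = α²/(α³ + 2). -/
/-- The Narayana's cows sequence: N 0 = 0, N 1 = N 2 = 1, N (m+3) = N (m+2) + N m. -/
def narayana : ℕ → ℕ
  | 0 => 0
  | 1 => 1
  | 2 => 1
  | m + 3 => narayana (m + 2) + narayana m

set_option maxHeartbeats 800000 in
theorem narayana_error_bound (α : ℝ) (hα : α ^ 3 - α ^ 2 - 1 = 0)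
    (m : ℕ) (hm : 1 ≤ m) :
    |(narayana m : ℝ) - (α ^ 2 / (α ^ 3 + 2)) * α ^ m|
      < 0.558 * α ^ (-(m : ℝ) / 2) := by
  have hα1 : (1.46 : ℝ) ≤ α := by
    nlinarith [sq_nonneg (α - 1.46), sq_nonneg α, sq_nonneg (α + 1), sq_nonneg (α - 1)]
  have hα2 : α ≤ (1.47 : ℝ) := by
    nlinarith [sq_nonneg (α - 1.47), sq_nonneg α, sq_nonneg (α + 1), sq_nonneg (α - 1)]
  have hαpos : (0 : ℝ) < α := by linarith
  have hαne : α ≠ 0 := ne_of_gt hαpos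
  have hden : α ^ 3 + 2 ≠ 0 := by positivity
  set a : ℝ := α ^ 2 / (α ^ 3 + 2) with ha
  set E : ℕ → ℝ := fun k => (narayana k : ℝ) - a * α ^ k with hE
  -- three-term recurrence for E
  have hrec3 : ∀ k, E (k + 3) = E (k + 2) + E k := by
    intro k
    have hn : (narayana (k + 3) : ℝ) = narayana (k + 2) + narayana k := by
      rw [show narayana (k + 3) = narayana (k + 2) + narayana k from rfl]
      push_cast; ring
    simp only [hE]
    rw [hn]
    have : α ^ (k + 3) = α ^ (k + 2) + α ^ k := by
      have : α ^ 3 = α ^ 2 + 1 := by linarith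
      calc α ^ (k + 3) = α ^ k * α ^ 3 := by ring
        _ = α ^ k * (α ^ 2 + 1) := by rw [this]
        _ = α ^ (k + 2) + α ^ k := by ring
    rw [this]; ring
  -- two-term recurrence for E
  have hrec2 : ∀ k, E (k + 2) = (1 - α) * E (k + 1) - α⁻¹ * E k := by
    intro k
    induction k with
    | zero =>
      show (narayana 2 : ℝ) - a * α ^ 2 = (1 - α) * ((narayana 1 : ℝ) - a * α ^ 1)
          - α⁻¹ * ((narayana 0 : ℝ) - a * α ^ 0)
      rw [show narayana 2 = 1 from rfl, show narayana 1 = 1 from rfl,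
        show narayana 0 = 0 from rfl, ha]
      push_cast
      field_simp
      linear_combination (-α^2) * hα
    | succ n ih =>
      have h3 := hrec3 n
      have key : (1 - α) * E (n + 2) - α⁻¹ * E (n + 1) = E (n + 2) + E n := by
        rw [ih]
        field_simp
        linear_combination E (n + 1) * hα
      rw [show n + 1 + 2 = n + 3 from rfl, h3, ← key]
  -- auxiliary identities
  have hα3 : α ^ 3 = α ^ 2 + 1 := by linarith
  have hα4 : α ^ 4 = α ^ 2 + α + 1 := by nlinarith [hα3]
  have hβ : (0:ℝ) < α ^ 2 + 3 := by positivity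
  -- the quadratic form
  set H : ℕ → ℝ := fun k => E (k + 1) ^ 2 - (1 - α) * E k * E (k + 1) + α⁻¹ * E k ^ 2 with hH
  have hHstep : ∀ k, H (k + 1) = α⁻¹ * H k := by
    intro k
    simp only [hH]
    rw [hrec2 k]
    ring
  have hHpow : ∀ k, H (k + 1) = (α⁻¹) ^ k * H 1 := by
    intro k
    induction k with
    | zero => simp
    | succ n ih => rw [hHstep (n + 1), ih]; ring
  have hE1 : E 1 = 2 / (α ^ 2 + 3) := by
    show (narayana 1 : ℝ) - a * α ^ 1 = 2 / (α ^ 2 + 3)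
    rw [show narayana 1 = 1 from rfl, ha]
    push_cast
    field_simp
    linear_combination (-2 : ℝ) * hα
  have hE2 : E 2 = (2 - α) / (α ^ 2 + 3) := by
    show (narayana 2 : ℝ) - a * α ^ 2 = (2 - α) / (α ^ 2 + 3)
    rw [show narayana 2 = 1 from rfl, ha]
    push_cast
    field_simp
    linear_combination (-α ^ 3 - 2 * α - 2) * hα
  have hH1 : H 1 = 1 / (α * (α ^ 2 + 3)) := by
    show E 2 ^ 2 - (1 - α) * E 1 * E 2 + α⁻¹ * E 1 ^ 2 = 1 / (α * (α ^ 2 + 3))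
    rw [hE1, hE2]
    field_simp
    linear_combination (-1 : ℝ) * hα
  set Df : ℝ := α⁻¹ - (1 - α) ^ 2 / 4 with hDfdef
  have hDf : Df = (α ^ 2 - α + 3) / (4 * α) := by
    rw [hDfdef]
    field_simp
    linear_combination (-1 : ℝ) * hα
  have hDfpos : 0 < Df := by
    rw [hDf]
    apply div_pos _ (by positivity)
    nlinarith [sq_nonneg (2 * α - 1)]
  have hquad : ∀ k, Df * E k ^ 2 ≤ H k := by
    intro k
    simp only [hH, hDfdef]
    nlinarith [sq_nonneg (E (k + 1) - (1 - α) * E k / 2)]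
  -- the key numeric inequality
  have key : H 1 * α < 0.558 ^ 2 * Df := by
    rw [hH1, hDf]
    have e1 : 1 / (α * (α ^ 2 + 3)) * α = 1 / (α ^ 2 + 3) := by field_simp
    rw [e1, show (0.558:ℝ) ^ 2 * ((α ^ 2 - α + 3) / (4 * α)) =
      0.558 ^ 2 * (α ^ 2 - α + 3) / (4 * α) from by ring,
      div_lt_div_iff₀ hβ (by positivity)]
    have e2 : (0.558:ℝ) ^ 2 * (α ^ 2 - α + 3) * (α ^ 2 + 3)
        = 0.311364 * (α ^ 4 - α ^ 3 + 6 * α ^ 2 - 3 * α + 9) := by ring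
    rw [e2, hα4, hα3]
    nlinarith [sq_nonneg (α - 1.46)]
  -- put it together for m = k + 1
  obtain ⟨k, rfl⟩ : ∃ k, m = k + 1 := ⟨m - 1, by omega⟩
  have hpk : (0:ℝ) < (α⁻¹) ^ k := by positivity
  have hmain : E (k + 1) ^ 2 < 0.558 ^ 2 * (α⁻¹) ^ (k + 1) := by
    have h1 : Df * E (k + 1) ^ 2 ≤ H (k + 1) := hquad (k + 1)
    rw [hHpow k] at h1
    have h3 : (α⁻¹) ^ k * H 1 < (α⁻¹) ^ k * (0.558 ^ 2 * Df * α⁻¹) := by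
      apply mul_lt_mul_of_pos_left _ hpk
      calc H 1 = H 1 * α * α⁻¹ := by field_simp
        _ < 0.558 ^ 2 * Df * α⁻¹ :=
            mul_lt_mul_of_pos_right key (by positivity)
    have h4 : Df * E (k + 1) ^ 2 < Df * (0.558 ^ 2 * (α⁻¹) ^ (k + 1)) := by
      calc Df * E (k + 1) ^ 2 ≤ (α⁻¹) ^ k * H 1 := h1
        _ < (α⁻¹) ^ k * (0.558 ^ 2 * Df * α⁻¹) := h3
        _ = Df * (0.558 ^ 2 * (α⁻¹) ^ (k + 1)) := by ring
    exact lt_of_mul_lt_mul_left h4 hDfpos.le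
  -- convert to the rpow statement
  have hr : (0:ℝ) < α ^ (-((k + 1 : ℕ) : ℝ) / 2) := Real.rpow_pos_of_pos hαpos _
  have hr2 : (α ^ (-((k + 1 : ℕ) : ℝ) / 2)) ^ 2 = (α⁻¹) ^ (k + 1) := by
    rw [← Real.rpow_natCast (α ^ (-((k + 1 : ℕ) : ℝ) / 2)) 2, ← Real.rpow_mul hαpos.le]
    rw [show -((k + 1 : ℕ) : ℝ) / 2 * (2 : ℕ) = -((k + 1 : ℕ) : ℝ) by push_cast; ring]
    rw [Real.rpow_neg hαpos.le, Real.rpow_natCast, inv_pow]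
  show |E (k + 1)| < 0.558 * α ^ (-((k + 1 : ℕ) : ℝ) / 2)
  have hpos : (0:ℝ) ≤ 0.558 * α ^ (-((k + 1 : ℕ) : ℝ) / 2) := by positivity
  refine lt_of_pow_lt_pow_left₀ 2 hpos ?_
  rw [mul_pow, hr2, sq_abs]
  exact hmain
end

section
/- Let m, n, k be positive integers with N_m = F_n · F_k. Then (log γ / log α)·(n + k) − 4.1 < m < (log γ / log α)·(n + k) + 0.5, where α is the unique real root of X³ − X² − 1 and γ = (1 + √5)/2. -/
set_option maxHeartbeats 1000000

lemma nar_lb (α : ℝ) (hα1 : 1 < α) (hα3 : α ^ 3 = α ^ 2 + 1) :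
    ∀ m, 1 ≤ m → α ^ m ≤ α ^ 3 * (narayana m : ℝ) := by
  intro m
  induction m using Nat.strong_induction_on with
  | _ m ih =>
    match m with
    | 0 => omega
    | 1 => intro _; show α ^ 1 ≤ α ^ 3 * ((narayana 1 : ℕ) : ℝ); norm_num [narayana]; nlinarith
    | 2 => intro _; show α ^ 2 ≤ α ^ 3 * ((narayana 2 : ℕ) : ℝ); norm_num [narayana]; nlinarith
    | 3 => intro _; show α ^ 3 ≤ α ^ 3 * ((narayana 3 : ℕ) : ℝ); norm_num [narayana]
    | (m+4) =>
      intro _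
      have h3 := ih (m+3) (by omega) (by omega)
      have h1 := ih (m+1) (by omega) (by omega)
      have hr : narayana (m+4) = narayana (m+3) + narayana (m+1) := rfl
      rw [hr]
      push_cast
      have he : α ^ (m+4) = α ^ (m+3) + α ^ (m+1) := by
        calc α ^ (m+4) = α ^ (m+1) * α ^ 3 := by ring
        _ = α ^ (m+1) * (α ^ 2 + 1) := by rw [hα3]
        _ = α ^ (m+3) + α ^ (m+1) := by ring
      rw [he, mul_add]
      linarith

lemma nar_ub (α : ℝ) (hα1 : 1 < α) (hα3 : α ^ 3 = α ^ 2 + 1) :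
    ∀ m, 1 ≤ m → α * (narayana m : ℝ) ≤ α ^ m := by
  intro m
  induction m using Nat.strong_induction_on with
  | _ m ih =>
    match m with
    | 0 => omega
    | 1 => intro _; show α * ((narayana 1 : ℕ) : ℝ) ≤ α ^ 1; norm_num [narayana]
    | 2 => intro _; show α * ((narayana 2 : ℕ) : ℝ) ≤ α ^ 2; norm_num [narayana]; nlinarith
    | 3 => intro _; show α * ((narayana 3 : ℕ) : ℝ) ≤ α ^ 3; norm_num [narayana]; nlinarith
    | (m+4) =>
      intro _
      have h3 := ih (m+3) (by omega) (by omega)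
      have h1 := ih (m+1) (by omega) (by omega)
      have hr : narayana (m+4) = narayana (m+3) + narayana (m+1) := rfl
      rw [hr]
      push_cast
      have he : α ^ (m+4) = α ^ (m+3) + α ^ (m+1) := by
        calc α ^ (m+4) = α ^ (m+1) * α ^ 3 := by ring
        _ = α ^ (m+1) * (α ^ 2 + 1) := by rw [hα3]
        _ = α ^ (m+3) + α ^ (m+1) := by ring
      rw [he, mul_add]
      linarith

lemma fib_lb (γ : ℝ) (hγ1 : 1 < γ) (hγ2 : γ ^ 2 = γ + 1) :
    ∀ n, 1 ≤ n → γ ^ n ≤ γ ^ 2 * (Nat.fib n : ℝ) := by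
  intro n
  induction n using Nat.strong_induction_on with
  | _ n ih =>
    match n with
    | 0 => omega
    | 1 => intro _; norm_num [Nat.fib]; nlinarith
    | 2 => intro _; norm_num [Nat.fib]
    | (n+3) =>
      intro _
      have h2 := ih (n+2) (by omega) (by omega)
      have h1 := ih (n+1) (by omega) (by omega)
      have hr : Nat.fib (n+3) = Nat.fib (n+1) + Nat.fib (n+2) := Nat.fib_add_two
      rw [hr]
      push_cast
      have he : γ ^ (n+3) = γ ^ (n+2) + γ ^ (n+1) := by
        calc γ ^ (n+3) = γ ^ (n+1) * γ ^ 2 := by ring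
        _ = γ ^ (n+1) * (γ + 1) := by rw [hγ2]
        _ = γ ^ (n+2) + γ ^ (n+1) := by ring
      rw [he, mul_add]
      linarith

lemma fib_ub (γ : ℝ) (hγ1 : 1 < γ) (hγ2 : γ ^ 2 = γ + 1) :
    ∀ n, 1 ≤ n → γ * (Nat.fib n : ℝ) ≤ γ ^ n := by
  intro n
  induction n using Nat.strong_induction_on with
  | _ n ih =>
    match n with
    | 0 => omega
    | 1 => intro _; norm_num [Nat.fib]
    | 2 => intro _; norm_num [Nat.fib]; nlinarith
    | (n+3) =>
      intro _
      have h2 := ih (n+2) (by omega) (by omega)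
      have h1 := ih (n+1) (by omega) (by omega)
      have hr : Nat.fib (n+3) = Nat.fib (n+1) + Nat.fib (n+2) := Nat.fib_add_two
      rw [hr]
      push_cast
      have he : γ ^ (n+3) = γ ^ (n+2) + γ ^ (n+1) := by
        calc γ ^ (n+3) = γ ^ (n+1) * γ ^ 2 := by ring
        _ = γ ^ (n+1) * (γ + 1) := by rw [hγ2]
        _ = γ ^ (n+2) + γ ^ (n+1) := by ring
      rw [he, mul_add]
      linarith

theorem m_bounds (α : ℝ) (hα : α ^ 3 - α ^ 2 - 1 = 0)
    (m n k : ℕ) (hm : 0 < m) (hn : 0 < n) (hk : 0 < k)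
    (h : narayana m = Nat.fib n * Nat.fib k) :
    (Real.log ((1 + Real.sqrt 5) / 2) / Real.log α) * (n + k) - 4.1 < (m : ℝ) ∧
    (m : ℝ) < (Real.log ((1 + Real.sqrt 5) / 2) / Real.log α) * (n + k) + 0.5 := by
  have hα3 : α ^ 3 = α ^ 2 + 1 := by linarith
  have hα0 : 0 < α := by nlinarith [sq_nonneg α, sq_nonneg (α - 1), sq_nonneg (α + 1)]
  have hαl : (1.465 : ℝ) < α := by nlinarith [sq_nonneg (α - 1.465), sq_nonneg α]
  have hαu : α < (1.466 : ℝ) := by nlinarith [sq_nonneg (α - 1.466), sq_nonneg α]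
  have hα1 : 1 < α := by linarith
  set γ : ℝ := (1 + Real.sqrt 5) / 2 with hγdef
  have hs0 : 0 ≤ Real.sqrt 5 := Real.sqrt_nonneg 5
  have hs : Real.sqrt 5 ^ 2 = 5 := Real.sq_sqrt (by norm_num)
  have hsl : (2.236 : ℝ) < Real.sqrt 5 := by nlinarith
  have hsu : Real.sqrt 5 < (2.237 : ℝ) := by nlinarith
  have hγ2 : γ ^ 2 = γ + 1 := by rw [hγdef]; nlinarith
  have hγl : (1.618 : ℝ) < γ := by rw [hγdef]; linarith
  have hγu : γ < (1.6185 : ℝ) := by rw [hγdef]; linarith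
  have hγ1 : 1 < γ := by linarith
  have hγ0 : 0 < γ := by linarith
  -- positivity facts
  have hfn : (0:ℝ) < Nat.fib n := by exact_mod_cast Nat.fib_pos.mpr hn
  have hfk : (0:ℝ) < Nat.fib k := by exact_mod_cast Nat.fib_pos.mpr hk
  have hN : (narayana m : ℝ) = (Nat.fib n : ℝ) * (Nat.fib k : ℝ) := by
    rw [h]; push_cast; ring
  -- growth bounds
  have lbN := nar_lb α hα1 hα3 m hm
  have ubN := nar_ub α hα1 hα3 m hm
  have fnu := fib_ub γ hγ1 hγ2 n hn
  have fku := fib_ub γ hγ1 hγ2 k hk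
  have fnl := fib_lb γ hγ1 hγ2 n hn
  have fkl := fib_lb γ hγ1 hγ2 k hk
  -- P1 : γ^2 * α^m ≤ α^3 * γ^(n+k)
  have hfg : (γ * Nat.fib n) * (γ * Nat.fib k) ≤ γ ^ n * γ ^ k :=
    mul_le_mul fnu fku (by positivity) (by positivity)
  have P1 : γ ^ 2 * α ^ m ≤ α ^ 3 * γ ^ (n + k) := by
    have s1 : γ ^ 2 * α ^ m ≤ γ ^ 2 * (α ^ 3 * (narayana m : ℝ)) :=
      mul_le_mul_of_nonneg_left lbN (by positivity)
    have s2 : γ ^ 2 * (α ^ 3 * (narayana m : ℝ)) = α ^ 3 * ((γ * Nat.fib n) * (γ * Nat.fib k)) := by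
      rw [hN]; ring
    have s3 : α ^ 3 * ((γ * Nat.fib n) * (γ * Nat.fib k)) ≤ α ^ 3 * (γ ^ n * γ ^ k) :=
      mul_le_mul_of_nonneg_left hfg (by positivity)
    rw [pow_add]
    linarith
  -- P2 : α * γ^(n+k) ≤ γ^4 * α^m
  have hfg2 : γ ^ n * γ ^ k ≤ (γ ^ 2 * Nat.fib n) * (γ ^ 2 * Nat.fib k) :=
    mul_le_mul fnl fkl (by positivity) (by positivity)
  have P2 : α * γ ^ (n + k) ≤ γ ^ 4 * α ^ m := by
    have s1 : α * (γ ^ n * γ ^ k) ≤ α * ((γ ^ 2 * Nat.fib n) * (γ ^ 2 * Nat.fib k)) :=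
      mul_le_mul_of_nonneg_left hfg2 (by positivity)
    have s2 : α * ((γ ^ 2 * Nat.fib n) * (γ ^ 2 * Nat.fib k)) = γ ^ 4 * (α * (narayana m : ℝ)) := by
      rw [hN]; ring
    have s3 : γ ^ 4 * (α * (narayana m : ℝ)) ≤ γ ^ 4 * α ^ m :=
      mul_le_mul_of_nonneg_left ubN (by positivity)
    rw [pow_add]
    linarith
  set L := Real.log α with hLdef
  set G := Real.log γ with hGdef
  have hL : 0 < L := Real.log_pos hα1
  have hG : 0 < G := Real.log_pos hγ1
  -- K1 from P1
  have K1 : 2 * G + (m : ℝ) * L ≤ 3 * L + ((n : ℝ) + k) * G := by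
    have t := Real.log_le_log (by positivity) P1
    rw [Real.log_mul (by positivity) (by positivity),
        Real.log_mul (by positivity) (by positivity)] at t
    simp only [Real.log_pow] at t
    push_cast at t
    linarith
  -- K2 from P2
  have K2 : L + ((n : ℝ) + k) * G ≤ 4 * G + (m : ℝ) * L := by
    have t := Real.log_le_log (by positivity) P2
    rw [Real.log_mul (by positivity) (by positivity),
        Real.log_mul (by positivity) (by positivity)] at t
    simp only [Real.log_pow] at t
    push_cast at t
    linarith
  -- K3 : 5 L < 4 G
  have hpow1 : α ^ 5 < γ ^ 4 := by
    calc α ^ 5 < (1.466 : ℝ) ^ 5 := by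
          exact pow_lt_pow_left₀ hαu (le_of_lt hα0) (by norm_num)
    _ < (1.618 : ℝ) ^ 4 := by norm_num
    _ ≤ γ ^ 4 := pow_le_pow_left₀ (by norm_num) (le_of_lt hγl) 4
  have K3 : 5 * L < 4 * G := by
    have t := Real.log_lt_log (by positivity) hpow1
    rw [Real.log_pow, Real.log_pow] at t
    push_cast at t
    linarith
  -- K4 : 40 G < 51 L
  have hpow2 : γ ^ 40 < α ^ 51 := by
    calc γ ^ 40 < (1.6185 : ℝ) ^ 40 := by
          exact pow_lt_pow_left₀ hγu (le_of_lt hγ0) (by norm_num)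
    _ < (1.465 : ℝ) ^ 51 := by norm_num
    _ ≤ α ^ 51 := pow_le_pow_left₀ (by norm_num) (le_of_lt hαl) 51
  have K4 : 40 * G < 51 * L := by
    have t := Real.log_lt_log (by positivity) hpow2
    rw [Real.log_pow, Real.log_pow] at t
    push_cast at t
    linarith
  constructor
  · rw [div_mul_eq_mul_div, sub_lt_iff_lt_add, div_lt_iff₀ hL]
    nlinarith
  · rw [← sub_lt_iff_lt_add, div_mul_eq_mul_div, lt_div_iff₀ hL]
    nlinarith
end

section
/- Let m, n, k be integers with m ≥ 2, 1 ≤ n ≤ k, satisfying N_m = F_n · F_k. Then |5a·α^m·γ^{−(n+k)} − 1| < 4.91 · γ^{−2n}, where α is the unique real root of X³ − X² − 1, a = α²/(α³ + 2) and γ = (1 + √5)/2. -/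
/-- Scaled error term: (α²+3)·N_m − α^(m+2). -/
noncomputable def Eaux (α : ℝ) (m : ℕ) : ℝ := (α ^ 2 + 3) * narayana m - α ^ (m + 2)

lemma Eaux_rec (α : ℝ) (hα : α ^ 3 - α ^ 2 - 1 = 0) (m : ℕ) :
    Eaux α (m + 3) = Eaux α (m + 2) + Eaux α m := by
  have : narayana (m + 3) = narayana (m + 2) + narayana m := rfl
  simp only [Eaux, this]
  push_cast
  linear_combination (-α ^ (m + 2)) * hα

lemma Eaux_GQ (α : ℝ) (hα : α ^ 3 - α ^ 2 - 1 = 0) : ∀ m : ℕ,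
    (α * Eaux α (m + 2) + (α ^ 2 - α) * Eaux α (m + 1) + Eaux α m = 0) ∧
    α ^ m * (α * Eaux α (m + 1) ^ 2 + (α ^ 2 - α) * Eaux α m * Eaux α (m + 1)
        + Eaux α m ^ 2) = (α ^ 2 + 3) * α := by
  intro m
  induction m with
  | zero =>
    constructor
    · simp only [Eaux, narayana]
      push_cast
      linear_combination (-2 * α ^ 2) * hα
    · simp only [Eaux, narayana]
      push_cast
      linear_combination (2 * α ^ 4 - 2 * α ^ 3 - 6 * α) * hα
  | succ p ih =>
    obtain ⟨g, q⟩ := ih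
    have hr := Eaux_rec α hα p
    constructor
    · linear_combination α * hr + α * g - Eaux α (p + 1) * hα
    · linear_combination q + (α ^ p * (α * Eaux α (p + 2) - Eaux α p)) * g

lemma final_aux (x1 x2 x3 x4 rn rk rnk : ℝ)
    (h11 : -rn ≤ x1) (h12 : x1 ≤ rn) (h21 : -rk ≤ x2) (h22 : x2 ≤ rk)
    (h31 : -rnk ≤ x3) (h32 : x3 ≤ rnk)
    (hrk : rk ≤ rn) (hrnk : rnk ≤ 0.382 * rn) (hrnpos : 0 < rn)
    (hD1 : -(2.2 * rn) ≤ x4) (hD2 : x4 ≤ 2.2 * rn) :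
    |(-x1 - x2 + x3 - x4)| < 4.91 * rn := by
  rw [abs_lt]
  constructor <;> linarith

set_option maxHeartbeats 1000000 in
theorem linear_form_one_bound (α : ℝ) (hα : α ^ 3 - α ^ 2 - 1 = 0)
    (m n k : ℕ) (hm : 2 ≤ m) (hn : 1 ≤ n) (hnk : n ≤ k)
    (h : narayana m = Nat.fib n * Nat.fib k) :
    |5 * (α ^ 2 / (α ^ 3 + 2)) * α ^ m * ((1 + Real.sqrt 5) / 2) ^ (-((n : ℤ) + k)) - 1|
      < 4.91 * ((1 + Real.sqrt 5) / 2) ^ (-(2 * (n : ℤ))) := by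
  -- numeric bounds for α
  have hα1 : (1.465 : ℝ) < α := by
    by_contra hc
    push_neg at hc
    nlinarith [mul_nonneg (sub_nonneg.mpr hc) (sq_nonneg (α + 0.2325))]
  have hα2 : α < 1.466 := by
    by_contra hc
    push_neg at hc
    nlinarith [mul_nonneg (sub_nonneg.mpr hc) (sq_nonneg (α + 0.233))]
  have hαpos : (0 : ℝ) < α := by linarith
  -- golden ratio facts
  have h5 : Real.sqrt 5 ^ 2 = 5 := Real.sq_sqrt (by norm_num)
  have h55 : Real.sqrt 5 * Real.sqrt 5 = 5 := Real.mul_self_sqrt (by norm_num)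
  have h5pos : (0 : ℝ) < Real.sqrt 5 := Real.sqrt_pos.mpr (by norm_num)
  have hs1 : (2.236 : ℝ) < Real.sqrt 5 := by nlinarith [h5, h5pos]
  set φ : ℝ := (1 + Real.sqrt 5) / 2 with hφ
  set ψ : ℝ := (1 - Real.sqrt 5) / 2 with hψ
  have hφ1 : (1 : ℝ) < φ := by rw [hφ]; linarith
  have hφψ : φ * ψ = -1 := by rw [hφ, hψ]; linear_combination (-1 / 4 : ℝ) * h5
  have hφpos : (0 : ℝ) < φ := by linarith
  set r : ℝ := ψ ^ 2 with hr
  have hrpos : (0 : ℝ) < r := by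
    have hψ0 : ψ ≠ 0 := by
      rw [hψ]
      intro hc
      have : Real.sqrt 5 = 1 := by linarith [sub_eq_zero.mp (by linarith [hc] : (1:ℝ) - Real.sqrt 5 = 0)]
      linarith
    rw [hr]
    positivity
  have hrlt : r < 0.382 := by
    rw [hr, hψ]
    nlinarith [h5, hs1]
  have hrlt1 : r < 1 := by linarith
  have hφ2r : φ ^ 2 * r = 1 := by
    rw [hr]
    have : (φ * ψ) ^ 2 = 1 := by rw [hφψ]; norm_num
    linear_combination this
  -- Binet
  have hfib : ∀ j : ℕ, (Nat.fib j : ℝ) = (φ ^ j - ψ ^ j) / Real.sqrt 5 := by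
    intro j
    have := Real.coe_fib_eq j
    rw [Real.goldenRatio, Real.goldenConj] at this
    exact this
  -- error bound
  obtain ⟨-, hQ⟩ := Eaux_GQ α hα m
  have hdpos : (0 : ℝ) < α ^ 2 + 3 := by positivity
  have hαm : α ^ 2 ≤ α ^ m := pow_le_pow_right₀ (by linarith) hm
  have hαmpos : (0 : ℝ) < α ^ m := by positivity
  set E : ℝ := Eaux α m with hE
  have hE2 : (3 * α + 1) * (α ^ m * E ^ 2)
      = 4 * (α ^ 2 + 3) * α ^ 2 - α ^ m * (2 * α * Eaux α (m + 1) + (α ^ 2 - α) * E) ^ 2 := by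
    linear_combination 4 * α * hQ + (α ^ m * E ^ 2) * (α - 1) * hα
  have hE3 : (3 * α + 1) * (α ^ 2 * E ^ 2) ≤ 4 * (α ^ 2 + 3) * α ^ 2 := by
    have h1 : (3 * α + 1) * (α ^ 2 * E ^ 2) ≤ (3 * α + 1) * (α ^ m * E ^ 2) := by
      apply mul_le_mul_of_nonneg_left _ (by linarith)
      exact mul_le_mul_of_nonneg_right hαm (sq_nonneg E)
    have h2 := mul_nonneg hαmpos.le
      (sq_nonneg (2 * α * Eaux α (m + 1) + (α ^ 2 - α) * E))
    linarith [hE2]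
  have hquad : (0 : ℝ) < -4 * α ^ 2 + 11.7 * α - 8.1 := by
    nlinarith [mul_pos (sub_pos.2 hα1) (sub_pos.2 hα2)]
  have hEsq : E ^ 2 ≤ 3.9 := by
    nlinarith [hE3, mul_pos hquad (mul_pos hαpos hαpos),
      mul_nonneg (mul_nonneg hquad.le (sq_nonneg α)) (sq_nonneg E)]
  have habsE : |E| ≤ 1.975 := by
    have h1 := sq_abs E
    nlinarith [abs_nonneg E]
  have hEb : 5 * |E| ≤ 2.2 * (α ^ 2 + 3) := by nlinarith [sq_nonneg (α - 1.465)]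
  -- key algebraic identity
  have hd : α ^ 3 + 2 = α ^ 2 + 3 := by linarith
  have haα : 5 * (α ^ 2 / (α ^ 3 + 2)) * α ^ m
      = 5 * (narayana m : ℝ) - 5 * E / (α ^ 2 + 3) := by
    rw [hd, hE, Eaux]
    field_simp
    ring
  have hbin : 5 * (narayana m : ℝ) = (φ ^ n - ψ ^ n) * (φ ^ k - ψ ^ k) := by
    rw [h]
    push_cast
    rw [hfib n, hfib k, div_mul_div_comm, h55]
    ring
  set t : ℝ := -r with ht
  have hφt : φ * t = ψ := by
    rw [ht, hr]
    linear_combination (-ψ) * hφψ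
  have hsplit : (φ ^ n - ψ ^ n) * (φ ^ k - ψ ^ k)
      = (1 - t ^ n) * (1 - t ^ k) * φ ^ (n + k) := by
    rw [← hφt, mul_pow, mul_pow, pow_add]
    ring
  -- zpow conversions
  have hz1 : φ ^ (-((n : ℤ) + k)) = (φ ^ (n + k) : ℝ)⁻¹ := by
    rw [show (-((n : ℤ) + k)) = -((n + k : ℕ) : ℤ) by push_cast; ring, zpow_neg, zpow_natCast]
  have hz2 : φ ^ (-(2 * (n : ℤ))) = ((φ ^ 2) ^ n : ℝ)⁻¹ := by
    rw [show (-(2 * (n : ℤ))) = -((2 * n : ℕ) : ℤ) by push_cast; ring, zpow_neg, zpow_natCast,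
      pow_mul]
  rw [hz1, hz2]
  have hP : (0 : ℝ) < φ ^ (n + k) := by positivity
  have hrn : ((φ ^ 2) ^ n : ℝ)⁻¹ = r ^ n := by
    refine (eq_inv_of_mul_eq_one_left ?_).symm
    rw [← mul_pow, mul_comm, hφ2r, one_pow]
  rw [hrn]
  have hrnpos : (0 : ℝ) < r ^ n := by positivity
  -- main decomposition
  have hΛ : 5 * (α ^ 2 / (α ^ 3 + 2)) * α ^ m * (φ ^ (n + k))⁻¹ - 1
      = -t ^ n - t ^ k + t ^ (n + k) - 5 * E / (α ^ 2 + 3) * (φ ^ (n + k))⁻¹ := by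
    rw [haα, hbin, hsplit]
    field_simp
    ring
  rw [hΛ]
  -- bounds on each piece
  have habs : ∀ j : ℕ, |t ^ j| = r ^ j := by
    intro j
    rw [ht, abs_pow, abs_neg, abs_of_pos hrpos]
  have h1 := abs_le.mp (le_of_eq (habs n))
  have h2 := abs_le.mp (le_of_eq (habs k))
  have h3 := abs_le.mp (le_of_eq (habs (n + k)))
  have hrk : r ^ k ≤ r ^ n := pow_le_pow_of_le_one hrpos.le hrlt1.le hnk
  have hk1 : r ^ k ≤ r := by
    calc r ^ k ≤ r ^ 1 := pow_le_pow_of_le_one hrpos.le hrlt1.le (le_trans hn hnk)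
      _ = r := pow_one r
  have hrnk : r ^ (n + k) ≤ 0.382 * r ^ n := by
    rw [pow_add]
    calc r ^ n * r ^ k ≤ r ^ n * r := mul_le_mul_of_nonneg_left hk1 (pow_nonneg hrpos.le n)
      _ ≤ r ^ n * 0.382 := mul_le_mul_of_nonneg_left hrlt.le (pow_nonneg hrpos.le n)
      _ = 0.382 * r ^ n := mul_comm _ _
  have hPinv : (φ ^ (n + k))⁻¹ ≤ r ^ n := by
    rw [← hrn, ← pow_mul]
    have h2n : φ ^ (2 * n) ≤ φ ^ (n + k) := pow_le_pow_right₀ hφ1.le (by omega)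
    exact inv_anti₀ (by positivity) h2n
  have hPinvpos : (0 : ℝ) < (φ ^ (n + k))⁻¹ := by positivity
  have hD : |5 * E / (α ^ 2 + 3) * (φ ^ (n + k))⁻¹| ≤ 2.2 * r ^ n := by
    rw [abs_mul, abs_div, abs_of_pos hdpos, abs_of_pos hPinvpos, abs_mul,
      abs_of_nonneg (by norm_num : (0:ℝ) ≤ 5)]
    have t1 : 5 * |E| / (α ^ 2 + 3) ≤ 2.2 := by
      rw [div_le_iff₀ hdpos]; linarith
    calc 5 * |E| / (α ^ 2 + 3) * (φ ^ (n + k))⁻¹ ≤ 2.2 * (φ ^ (n + k))⁻¹ :=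
          mul_le_mul_of_nonneg_right t1 hPinvpos.le
      _ ≤ 2.2 * r ^ n := mul_le_mul_of_nonneg_left hPinv (by norm_num)
  obtain ⟨hD1, hD2⟩ := abs_le.mp hD
  exact final_aux _ _ _ _ _ _ _ h1.1 h1.2 h2.1 h2.2 h3.1 h3.2 hrk hrnk hrnpos hD1 hD2
end

section
/- For all positive integers m and s, 5a·α^m ≠ γ^s, where α is the unique real root of X³ − X² − 1, a = α²/(α³ + 2) and γ = (1 + √5)/2. (Equivalently, the linear form Λ₁ = 5a·α^m·γ^{−s} − 1 never vanishes.) -/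
open Polynomial IntermediateField goldenRatio Real

private lemma cubic_no_rat_root (q : ℚ) : q ^ 3 - q ^ 2 - 1 ≠ 0 := by
  intro h
  have hden : (q.den : ℚ) ≠ 0 := by exact_mod_cast q.den_nz
  have hkey : ((q.num : ℚ) / (q.den : ℚ)) ^ 3 - ((q.num : ℚ) / (q.den : ℚ)) ^ 2 - 1 = 0 := by
    rw [Rat.num_div_den]; exact h
  have hkey2 : (q.num : ℚ) ^ 3 = (q.num : ℚ) ^ 2 * (q.den : ℚ) + (q.den : ℚ) ^ 3 := by
    field_simp at hkey
    have hfac : ((q.den : ℚ)) ^ 2 *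
        ((q.num : ℚ) ^ 3 - (q.num : ℚ) ^ 2 * (q.den : ℚ) - (q.den : ℚ) ^ 3) = 0 := by
      linear_combination ((q.den : ℚ)) ^ 2 * hkey
    rcases mul_eq_zero.mp hfac with h' | h'
    · exact absurd (pow_eq_zero_iff (by norm_num) |>.mp h') hden
    · linarith
  have hkeyZ : q.num ^ 3 = q.num ^ 2 * (q.den : ℤ) + (q.den : ℤ) ^ 3 := by
    exact_mod_cast hkey2
  -- q.den divides q.num ^ 3, hence q.den = 1
  have hdvd : (q.den : ℤ) ∣ q.num ^ 3 := ⟨q.num ^ 2 + (q.den : ℤ) ^ 2, by linarith [hkeyZ]⟩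
  have hdvdN : q.den ∣ q.num.natAbs ^ 3 := by
    have := Int.natAbs_dvd_natAbs.mpr hdvd
    simpa [Int.natAbs_pow] using this
  have hcop : Nat.Coprime (q.num.natAbs ^ 3) q.den := (q.reduced).pow_left 3
  have hd1 : q.den = 1 := Nat.Coprime.eq_one_of_dvd hcop.symm hdvdN
  -- integer root
  have hn : q.num ^ 3 = q.num ^ 2 + 1 := by
    rw [hd1] at hkeyZ; simpa using hkeyZ
  have h1 : q.num ^ 2 * (q.num - 1) = 1 := by ring_nf; linarith [hn]
  have h2 : q.num ∣ 1 := ⟨q.num * (q.num - 1), by linear_combination -h1⟩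
  rcases Int.isUnit_iff.mp (isUnit_of_dvd_one h2) with h3 | h3 <;> rw [h3] at hn <;> omega

private lemma sq_no_rat_root (q : ℚ) : q ^ 2 - 5 ≠ 0 := by
  intro h
  have h5 : Irrational (Real.sqrt 5) := by
    have := (by norm_num : Nat.Prime 5).irrational_sqrt
    simpa using this
  have hq : ((q : ℝ)) ^ 2 = 5 := by
    have : (q : ℚ) ^ 2 = 5 := by linarith
    exact_mod_cast this
  have heq : Real.sqrt 5 = |(q : ℝ)| := by
    rw [← hq, Real.sqrt_sq_eq_abs]
  rw [heq] at h5
  exact h5 ⟨|q|, by push_cast; simp⟩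

theorem linear_form_one_nonzero (α : ℝ) (hα : α ^ 3 - α ^ 2 - 1 = 0)
    (m s : ℕ) (hm : 0 < m) (hs : 0 < s) :
    5 * (α ^ 2 / (α ^ 3 + 2)) * α ^ m ≠ ((1 + Real.sqrt 5) / 2) ^ s := by
  intro h
  have hα3 : α ^ 3 = α ^ 2 + 1 := by linarith
  have hden : α ^ 3 + 2 ≠ 0 := by nlinarith [sq_nonneg α]
  -- the minimal polynomial of α over ℚ
  set p : ℚ[X] := X ^ 3 - X ^ 2 - 1 with hp
  have hpmonic : p.Monic := by unfold p; monicity!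
  have hpdeg : p.natDegree = 3 := by unfold p; compute_degree!
  have hpirr : Irreducible p := by
    rw [hpmonic.irreducible_iff_roots_eq_zero_of_degree_le_three (by rw [hpdeg]; norm_num)
      (by rw [hpdeg])]
    apply Multiset.eq_zero_of_forall_notMem
    intro q hq
    rw [mem_roots hpmonic.ne_zero] at hq
    simp only [IsRoot, hp, eval_sub, eval_pow, eval_X, eval_one] at hq
    exact cubic_no_rat_root q hq
  have haeval : Polynomial.aeval α p = 0 := by
    simp only [hp, map_sub, map_pow, aeval_X, map_one]
    linarith
  have hint : IsIntegral ℚ α := ⟨p, hpmonic, haeval⟩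
  have hminα : minpoly ℚ α = p :=
    (minpoly.eq_of_irreducible_of_monic hpirr haeval hpmonic).symm
  have hFD : FiniteDimensional ℚ ℚ⟮α⟯ := IntermediateField.adjoin.finiteDimensional hint
  have hrank : Module.finrank ℚ ℚ⟮α⟯ = 3 := by
    rw [IntermediateField.adjoin.finrank hint, hminα, hpdeg]
  -- √5 belongs to ℚ⟮α⟯
  have hφ : ((1 + Real.sqrt 5) / 2) = φ := rfl
  have hfib : φ * (Nat.fib s : ℝ) + (Nat.fib (s - 1) : ℝ) = φ ^ s := by
    have := goldenRatio_mul_fib_succ_add_fib (s - 1)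
    rwa [Nat.sub_add_cancel hs] at this
  have hfibpos : (0 : ℝ) < (Nat.fib s : ℝ) := by
    exact_mod_cast Nat.fib_pos.mpr hs
  have hαmem : α ∈ ℚ⟮α⟯ := mem_adjoin_simple_self ℚ α
  have h5mem : (5 : ℝ) ∈ ℚ⟮α⟯ := by
    simpa using IntermediateField.algebraMap_mem ℚ⟮α⟯ (5 : ℚ)
  have h2mem : (2 : ℝ) ∈ ℚ⟮α⟯ := by
    simpa using IntermediateField.algebraMap_mem ℚ⟮α⟯ (2 : ℚ)
  have hLHS : 5 * (α ^ 2 / (α ^ 3 + 2)) * α ^ m ∈ ℚ⟮α⟯ :=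
    mul_mem (mul_mem h5mem
      (div_mem (pow_mem hαmem 2) (add_mem (pow_mem hαmem 3) h2mem))) (pow_mem hαmem m)
  have hφmem : φ ∈ ℚ⟮α⟯ := by
    have hφeq : φ = (5 * (α ^ 2 / (α ^ 3 + 2)) * α ^ m - (Nat.fib (s-1) : ℝ))
        / (Nat.fib s : ℝ) := by
      rw [eq_div_iff (ne_of_gt hfibpos), h, hφ, ← hfib]
      ring
    rw [hφeq]
    exact div_mem (sub_mem hLHS (IntermediateField.natCast_mem _ _))
      (IntermediateField.natCast_mem _ _)
  have hsqrtmem : Real.sqrt 5 ∈ ℚ⟮α⟯ := by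
    have heq : Real.sqrt 5 = 2 * φ - 1 := by
      show Real.sqrt 5 = 2 * ((1 + Real.sqrt 5) / 2) - 1
      ring
    rw [heq]
    exact sub_mem (mul_mem h2mem hφmem) (one_mem _)
  -- the minimal polynomial of √5 has degree 2
  set q : ℚ[X] := X ^ 2 - C 5 with hqdef
  have hqmonic : q.Monic := by unfold q; monicity!
  have hqdeg : q.natDegree = 2 := by unfold q; compute_degree!
  have hqirr : Irreducible q := by
    rw [hqmonic.irreducible_iff_roots_eq_zero_of_degree_le_three (by rw [hqdeg])
      (by rw [hqdeg]; norm_num)]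
    apply Multiset.eq_zero_of_forall_notMem
    intro r hr
    rw [mem_roots hqmonic.ne_zero] at hr
    simp only [IsRoot, hqdef, eval_sub, eval_pow, eval_X, eval_C] at hr
    exact sq_no_rat_root r hr
  have hqaeval : Polynomial.aeval (Real.sqrt 5) q = 0 := by
    simp only [hqdef, map_sub, map_pow, aeval_X, aeval_C]
    rw [Real.sq_sqrt (by norm_num : (0:ℝ) ≤ 5)]
    norm_num
  have hminq : minpoly ℚ (Real.sqrt 5) = q :=
    (minpoly.eq_of_irreducible_of_monic hqirr hqaeval hqmonic).symm
  -- transfer to the subfield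
  set x : ℚ⟮α⟯ := ⟨Real.sqrt 5, hsqrtmem⟩ with hxdef
  have hxmap : algebraMap ℚ⟮α⟯ ℝ x = Real.sqrt 5 := rfl
  have hminx : minpoly ℚ x = q := by
    rw [← hminq, ← hxmap]
    exact (minpoly.algebraMap_eq (algebraMap ℚ⟮α⟯ ℝ).injective x).symm
  have hxint : IsIntegral ℚ x := IsIntegral.of_finite ℚ x
  have hdvd := minpoly.degree_dvd hxint
  rw [hminx, hqdeg, hrank] at hdvd
  norm_num at hdvd
end

section
/- Let m, n, k be integers with m ≥ 1, n ≥ 1, k ≥ 2, satisfying N_m = F_n · F_k. Then 0 < |√5·a·α^m/(F_n·γ^k) − 1| < 2.637 · γ^{−k}, where α is the unique real root of X³ − X² − 1, a = α²/(α³ + 2) and γ = (1 + √5)/2; in particular √5·a·α^m ≠ F_n·γ^k. -/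
open Polynomial IntermediateField

lemma int_no_root (a : ℤ) (h : a ^ 3 = a ^ 2 + 1) : False := by
  rcases le_or_gt a 1 with h1 | h1
  · nlinarith [sq_nonneg a]
  · nlinarith [sq_nonneg a]

lemma no_rat_root (r : ℚ) : r ^ 3 ≠ r ^ 2 + 1 := by
  intro hr
  have hd : ((r.den : ℤ) : ℚ) ≠ 0 := by exact_mod_cast r.den_nz
  have hre : r = (r.num : ℚ) / ((r.den : ℤ) : ℚ) := by exact_mod_cast (Rat.num_div_den r).symm
  rw [hre] at hr
  field_simp at hr
  have key0 : r.num ^ 3 * (r.den : ℤ) ^ 2 = (r.num ^ 2 + (r.den : ℤ) ^ 2) * (r.den : ℤ) ^ 3 := by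
    have hr' : r.num ^ 3 = (r.den : ℤ) * (r.num ^ 2 + (r.den : ℤ) ^ 2) := by exact_mod_cast hr
    linear_combination ((r.den : ℤ) ^ 2) * hr'
  have hd2 : ((r.den : ℤ)) ^ 2 ≠ 0 := by positivity
  have key : r.num ^ 3 = (r.num ^ 2 + (r.den : ℤ) ^ 2) * (r.den : ℤ) := by
    apply mul_right_cancel₀ hd2
    linear_combination key0
  have hdvd : (r.den : ℤ) ∣ r.num ^ 3 := ⟨r.num ^ 2 + (r.den : ℤ) ^ 2, by linarith [key]⟩
  have hdvdn : r.den ∣ r.num.natAbs ^ 3 := by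
    have := Int.natAbs_dvd_natAbs.mpr hdvd
    simpa [Int.natAbs_pow] using this
  have hcop : Nat.Coprime r.den (r.num.natAbs ^ 3) := (r.reduced.symm).pow_right 3
  have hden1 : r.den = 1 := Nat.eq_one_of_dvd_coprimes hcop dvd_rfl hdvdn
  have : r.num ^ 3 = r.num ^ 2 + 1 := by
    have := key
    rw [hden1] at this
    push_cast at this
    linarith
  exact int_no_root _ this


open Polynomial IntermediateField


lemma cubic_natDegree : (X ^ 3 - X ^ 2 - 1 : ℚ[X]).natDegree = 3 := by
  compute_degree!

lemma cubic_monic : (X ^ 3 - X ^ 2 - 1 : ℚ[X]).Monic := by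
  monicity!

lemma cubic_irr : Irreducible (X ^ 3 - X ^ 2 - 1 : ℚ[X]) := by
  rw [Polynomial.irreducible_iff_roots_eq_zero_of_degree_le_three
    (by rw [cubic_natDegree]; norm_num) (by rw [cubic_natDegree])]
  rw [Multiset.eq_zero_iff_forall_notMem]
  intro r hr
  rw [mem_roots cubic_monic.ne_zero] at hr
  have h2 : r ^ 3 - r ^ 2 - 1 = 0 := by simpa [IsRoot] using hr
  exact no_rat_root r (by linarith)

lemma aeval_cubic (α : ℝ) (hα : α ^ 3 - α ^ 2 - 1 = 0) :
    (Polynomial.aeval α) (X ^ 3 - X ^ 2 - 1 : ℚ[X]) = 0 := by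
  simp [hα]

lemma alpha_integral (α : ℝ) (hα : α ^ 3 - α ^ 2 - 1 = 0) : IsIntegral ℚ α :=
  ⟨X ^ 3 - X ^ 2 - 1, cubic_monic, by simpa using aeval_cubic α hα⟩

lemma minpoly_alpha (α : ℝ) (hα : α ^ 3 - α ^ 2 - 1 = 0) :
    (minpoly ℚ α).natDegree = 3 := by
  have h := minpoly.eq_of_irreducible_of_monic cubic_irr (aeval_cubic α hα) cubic_monic
  rw [← h]
  exact cubic_natDegree

lemma golden_pow (k : ℕ) : ∃ A B : ℚ, 0 < A ∧ 0 ≤ B ∧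
    ((1 + Real.sqrt 5) / 2) ^ k = (A : ℝ) + (B : ℝ) * Real.sqrt 5 := by
  induction k with
  | zero => exact ⟨1, 0, by norm_num, le_refl 0, by norm_num⟩
  | succ k ih =>
    obtain ⟨A, B, hA, hB, hg⟩ := ih
    refine ⟨A / 2 + 5 * B / 2, A / 2 + B / 2, by positivity, by positivity, ?_⟩
    have hs : Real.sqrt 5 ^ 2 = 5 := Real.sq_sqrt (by norm_num)
    rw [pow_succ, hg]
    push_cast
    linear_combination ((B : ℝ) / 2) * hs

lemma key_ne (α : ℝ) (hα : α ^ 3 - α ^ 2 - 1 = 0) (m n k : ℕ) (hn : 1 ≤ n) :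
    Real.sqrt 5 * (α ^ 2 / (α ^ 3 + 2)) * α ^ m
        ≠ (Nat.fib n : ℝ) * ((1 + Real.sqrt 5) / 2) ^ k := by
  intro heq
  obtain ⟨A, B, hA, hB, hg⟩ := golden_pow k
  have hint : IsIntegral ℚ α := alpha_integral α hα
  have hfin : FiniteDimensional ℚ ℚ⟮α⟯ := IntermediateField.adjoin.finiteDimensional hint
  have hrank : Module.finrank ℚ ℚ⟮α⟯ = 3 := by
    rw [IntermediateField.adjoin.finrank hint, minpoly_alpha α hα]
  set t : ℝ := α ^ 2 / (α ^ 3 + 2) * α ^ m with ht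
  have hαK : α ∈ ℚ⟮α⟯ := IntermediateField.mem_adjoin_simple_self ℚ α
  have h2K : (2:ℝ) ∈ ℚ⟮α⟯ := by
    have h1 := one_mem ℚ⟮α⟯
    have := add_mem h1 h1
    simpa [one_add_one_eq_two] using this
  have htK : t ∈ ℚ⟮α⟯ := by
    apply mul_mem _ (pow_mem hαK m)
    apply div_mem (pow_mem hαK 2)
    exact add_mem (pow_mem hαK 3) h2K
  -- rationals
  set u : ℚ := (Nat.fib n : ℚ) * A with hu
  set v : ℚ := (Nat.fib n : ℚ) * B with hv
  have hcu : ((u : ℚ) : ℝ) = (Nat.fib n : ℝ) * (A : ℝ) := by rw [hu]; push_cast; ring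
  have hcv : ((v : ℚ) : ℝ) = (Nat.fib n : ℝ) * (B : ℝ) := by rw [hv]; push_cast; ring
  have hfibpos : 0 < (Nat.fib n : ℚ) := by exact_mod_cast Nat.fib_pos.mpr hn
  have hune : (0:ℚ) < u := mul_pos hfibpos hA
  have hs : Real.sqrt 5 ^ 2 = 5 := Real.sq_sqrt (by norm_num)
  have heq2 : Real.sqrt 5 * (t - (v:ℝ)) = (u:ℝ) := by
    rw [hg] at heq
    linear_combination heq - Real.sqrt 5 * hcv - hcu
  have hquad : t ^ 2 - 2 * (v:ℝ) * t + ((v:ℝ) ^ 2 - (u:ℝ) ^ 2 / 5) = 0 := by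
    have h2 : 5 * (t - (v:ℝ)) ^ 2 = (u:ℝ) ^ 2 := by
      have h3 := congrArg (· ^ 2) heq2
      simp only [mul_pow] at h3
      rw [hs] at h3
      linarith
    linarith
  -- quadratic polynomial annihilating t
  set q : ℚ[X] := X ^ 2 - Polynomial.C (2 * v) * X + Polynomial.C (v ^ 2 - u ^ 2 / 5) with hq
  have hqeq : q = X ^ 2 - (Polynomial.C (2 * v) * X - Polynomial.C (v ^ 2 - u ^ 2 / 5)) := by
    rw [hq]; ring
  have hqmonic : q.Monic := by
    rw [hqeq]
    apply Polynomial.monic_X_pow_sub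
    apply lt_of_le_of_lt (by compute_degree : _ ≤ (1 : WithBot ℕ))
    decide
  have haeq : (Polynomial.aeval t) q = 0 := by
    rw [hq]
    simp only [map_add, map_sub, map_pow, map_mul, Polynomial.aeval_X, Polynomial.aeval_C,
      eq_ratCast]
    push_cast
    linarith [hquad]
  have htint : IsIntegral ℚ t := ⟨q, hqmonic, haeq⟩
  have hdegle : (minpoly ℚ t).natDegree ≤ 2 := by
    have hle := minpoly.degree_le_of_ne_zero ℚ t hqmonic.ne_zero haeq
    have hq2 : q.natDegree = 2 := by rw [hq]; compute_degree!
    calc (minpoly ℚ t).natDegree ≤ q.natDegree :=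
          Polynomial.natDegree_le_natDegree hle
      _ = 2 := hq2
  -- t as element of K
  set tK : ℚ⟮α⟯ := ⟨t, htK⟩ with htKdef
  have hmap : (algebraMap ℚ⟮α⟯ ℝ) tK = t := rfl
  have hmineq : minpoly ℚ tK = minpoly ℚ t := by
    rw [← hmap]
    exact (minpoly.algebraMap_eq (algebraMap ℚ⟮α⟯ ℝ).injective tK).symm
  have hdvd : (minpoly ℚ tK).natDegree ∣ 3 := by
    rw [← hrank]
    exact minpoly.degree_dvd (IsIntegral.of_finite ℚ tK)
  rw [hmineq] at hdvd
  have hpos : 0 < (minpoly ℚ t).natDegree := minpoly.natDegree_pos htint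
  have hdeg1 : (minpoly ℚ t).natDegree = 1 := by
    rcases (Nat.dvd_prime (by norm_num : Nat.Prime 3)).mp hdvd with h1 | h3
    · exact h1
    · omega
  -- t is rational
  have hmon : (minpoly ℚ t).Monic := minpoly.monic htint
  obtain ⟨c, hc⟩ : ∃ c : ℚ, minpoly ℚ t = X + Polynomial.C c := ⟨_, hmon.eq_X_add_C hdeg1⟩
  have htrat : t = ((-c : ℚ) : ℝ) := by
    have h4 := minpoly.aeval ℚ t
    rw [hc] at h4
    simp only [map_add, Polynomial.aeval_X, Polynomial.aeval_C, eq_ratCast] at h4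
    push_cast
    linarith
  -- contradiction with irrationality of sqrt 5
  have hcv2 : t - (v:ℝ) = ((-c - v : ℚ) : ℝ) := by rw [htrat]; push_cast; ring
  rw [hcv2] at heq2
  have hne : ((-c - v : ℚ) : ℝ) ≠ 0 := by
    intro h0
    rw [h0, mul_zero] at heq2
    exact absurd (by exact_mod_cast heq2.symm : u = 0) (ne_of_gt hune)
  have hsqrt_rat : Real.sqrt 5 = ((u / (-c - v) : ℚ) : ℝ) := by
    rw [Rat.cast_div, eq_div_iff hne]
    exact heq2
  have hirr : Irrational (Real.sqrt 5) := by
    simpa using (Nat.Prime.irrational_sqrt (by norm_num : Nat.Prime 5))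
  exact hirr ⟨_, hsqrt_rat.symm⟩

noncomputable def nerr (α : ℝ) (j : ℕ) : ℝ :=
  (narayana j : ℝ) - (α ^ 2 / (α ^ 3 + 2)) * α ^ j

noncomputable def nQ (α : ℝ) (j : ℕ) : ℝ :=
  nerr α (j+1) ^ 2 + (α - 1) * nerr α j * nerr α (j+1) + (1/α) * (nerr α j) ^ 2

lemma alpha_gt (α : ℝ) (hα : α ^ 3 - α ^ 2 - 1 = 0) : 1.46 < α := by
  by_contra hc
  push_neg at hc
  have h0 : 0 < α := by nlinarith [sq_nonneg α, sq_nonneg (α - 1), sq_nonneg (α + 1)]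
  nlinarith [sq_nonneg (α - 1.46), sq_nonneg α, sq_nonneg (α - 1)]

lemma alpha_lt (α : ℝ) (hα : α ^ 3 - α ^ 2 - 1 = 0) : α < 1.47 := by
  by_contra hc
  push_neg at hc
  nlinarith [sq_nonneg (α - 1.47)]

lemma den_pos (α : ℝ) (hα : α ^ 3 - α ^ 2 - 1 = 0) : (0:ℝ) < α ^ 3 + 2 := by
  nlinarith [alpha_gt α hα]

lemma nerr_rec3 (α : ℝ) (hα : α ^ 3 - α ^ 2 - 1 = 0) (i : ℕ) :
    nerr α (i+3) = nerr α (i+2) + nerr α i := by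
  have hnar : (narayana (i+3) : ℝ) = (narayana (i+2) : ℝ) + (narayana i : ℝ) := by
    rw [show narayana (i+3) = narayana (i+2) + narayana i from rfl]
    push_cast; ring
  have hd := den_pos α hα
  simp only [nerr, hnar]
  have hpow : α ^ (i+3) = α ^ (i+2) + α ^ i := by
    have : α ^ 3 = α ^ 2 + 1 := by linarith
    calc α ^ (i+3) = α ^ i * α ^ 3 := by ring
      _ = α ^ i * (α ^ 2 + 1) := by rw [this]
      _ = α ^ (i+2) + α ^ i := by ring
  rw [hpow]
  ring

lemma alpha_ne (α : ℝ) (hα : α ^ 3 - α ^ 2 - 1 = 0) : α ≠ 0 := by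
  have := alpha_gt α hα; intro h; rw [h] at this; norm_num at this

lemma nerr_vals (α : ℝ) (hα : α ^ 3 - α ^ 2 - 1 = 0) :
    nerr α 0 = -(α ^ 2 / (α ^ 3 + 2)) ∧ nerr α 1 = 1 - (α ^ 2 / (α ^ 3 + 2)) * α ∧
    nerr α 2 = 1 - (α ^ 2 / (α ^ 3 + 2)) * α ^ 2 := by
  refine ⟨?_, ?_, ?_⟩ <;>
  · simp only [nerr]
    norm_num [show narayana 0 = 0 from rfl, show narayana 1 = 1 from rfl,
      show narayana 2 = 1 from rfl]
    try ring

lemma nerr_S (α : ℝ) (hα : α ^ 3 - α ^ 2 - 1 = 0) (i : ℕ) :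
    α * nerr α (i+2) - (α - α ^ 2) * nerr α (i+1) + nerr α i = 0 := by
  induction i with
  | zero =>
    obtain ⟨h0, h1, h2⟩ := nerr_vals α hα
    rw [h0, h1, h2]
    have hd : α ^ 3 + 2 ≠ 0 := ne_of_gt (den_pos α hα)
    field_simp
    ring_nf
    linear_combination (norm := ring_nf) (-(α^2)) * hα
  | succ i ih =>
    have h3 := nerr_rec3 α hα i
    have : α * nerr α (i+3) - (α - α ^ 2) * nerr α (i+2) + nerr α (i+1)
        = α * (α * nerr α (i+2) - (α - α ^ 2) * nerr α (i+1) + nerr α i)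
          - nerr α (i+1) * (α ^ 3 - α ^ 2 - 1) := by
      rw [h3]; ring
    rw [show i + 1 + 2 = i + 3 from rfl, show i + 1 + 1 = i + 2 from rfl, this, ih, hα]
    ring

lemma nQ_step (α : ℝ) (hα : α ^ 3 - α ^ 2 - 1 = 0) (i : ℕ) :
    α * nQ α (i+1) = nQ α i := by
  have hS := nerr_S α hα i
  have hne := alpha_ne α hα
  simp only [nQ]
  have hrec : nerr α (i+2) = (1 - α) * nerr α (i+1) - (1/α) * nerr α i := by
    field_simp
    linarith [hS]
  rw [show i + 1 + 1 = i + 2 from rfl, hrec]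
  field_simp
  ring

lemma nQ_val (α : ℝ) (hα : α ^ 3 - α ^ 2 - 1 = 0) (i : ℕ) :
    nQ α i * α ^ i = nQ α 0 := by
  induction i with
  | zero => simp
  | succ i ih =>
    calc nQ α (i+1) * α ^ (i+1) = (α * nQ α (i+1)) * α ^ i := by ring
      _ = nQ α i * α ^ i := by rw [nQ_step α hα i]
      _ = nQ α 0 := ih

lemma nQ_lower (α : ℝ) (hα : α ^ 3 - α ^ 2 - 1 = 0) (i : ℕ) :
    0.6249 * nerr α i ^ 2 ≤ nQ α i ∧ 0 ≤ nQ α i := by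
  have h1 := alpha_gt α hα
  have h2 := alpha_lt α hα
  have hinv : 0.6802 < 1/α := by rw [lt_div_iff₀ (by linarith)]; nlinarith
  have hcoef : (0.6249:ℝ) ≤ 1/α - (α-1)^2/4 := by nlinarith
  have hkey : nQ α i = (nerr α (i+1) + (α-1)/2 * nerr α i) ^ 2
      + (1/α - (α-1)^2/4) * nerr α i ^ 2 := by
    simp only [nQ]; ring
  have hsq1 := sq_nonneg (nerr α (i+1) + (α-1)/2 * nerr α i)
  have hsq2 := sq_nonneg (nerr α i)
  have hmul : 0 ≤ (1/α - (α-1)^2/4 - 0.6249) * nerr α i ^ 2 :=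
    mul_nonneg (by linarith) hsq2
  constructor
  · rw [hkey]; nlinarith [hmul]
  · rw [hkey]; nlinarith [mul_nonneg (by linarith : (0:ℝ) ≤ 1/α - (α-1)^2/4) hsq2]

lemma a_bounds (α : ℝ) (hα : α ^ 3 - α ^ 2 - 1 = 0) :
    0.41 < α ^ 2 / (α ^ 3 + 2) ∧ α ^ 2 / (α ^ 3 + 2) < 0.4212 := by
  have h1 := alpha_gt α hα
  have h2 := alpha_lt α hα
  have hd := den_pos α hα
  constructor
  · rw [lt_div_iff₀ hd]; nlinarith
  · rw [div_lt_iff₀ hd]; nlinarith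

lemma nQ0_bound (α : ℝ) (hα : α ^ 3 - α ^ 2 - 1 = 0) : nQ α 0 ≤ 0.212 := by
  have h1 := alpha_gt α hα
  have h2 := alpha_lt α hα
  obtain ⟨ha1, ha2⟩ := a_bounds α hα
  obtain ⟨h0, hv1, _⟩ := nerr_vals α hα
  set a := α ^ 2 / (α ^ 3 + 2) with ha
  have hinv1 : 1/α < 0.685 := by rw [div_lt_iff₀ (by linarith)]; nlinarith
  have hinv0 : (0:ℝ) < 1/α := by positivity
  have he1a : 1 - a * α < 0.4014 := by nlinarith
  have he1b : 0.3808 < 1 - a * α := by nlinarith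
  have he1sq : (1 - a*α)^2 < 0.1612 := by nlinarith
  have hpa : 0.188 < (α-1) * a := by nlinarith
  have hterm2 : 0.0715 < (α-1) * a * (1 - a*α) := by nlinarith
  have hasq : a^2 < 0.17741 := by nlinarith
  have hterm3 : (1/α) * a^2 < 0.1216 := by nlinarith
  simp only [nQ, h0, hv1]
  nlinarith [he1sq, hterm2, hterm3]

lemma err_sq_bound (α : ℝ) (hα : α ^ 3 - α ^ 2 - 1 = 0) (i : ℕ) (hi : 1 ≤ i) :
    nerr α i ^ 2 ≤ 0.25 := by
  have h1 := alpha_gt α hα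
  have h2 := alpha_lt α hα
  obtain ⟨hQl, hQ0⟩ := nQ_lower α hα i
  have hQval := nQ_val α hα i
  have hQ0b := nQ0_bound α hα
  have hαpow : α ≤ α ^ i := by
    calc α = α ^ 1 := (pow_one α).symm
    _ ≤ α ^ i := pow_le_pow_right₀ (by linarith) hi
  have hQi : nQ α i * α ≤ 0.212 := by
    calc nQ α i * α ≤ nQ α i * α ^ i := by nlinarith
    _ = nQ α 0 := hQval
    _ ≤ 0.212 := hQ0b
  nlinarith [mul_le_mul_of_nonneg_right hQl (by linarith : (0:ℝ) ≤ α), hQi]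

set_option maxHeartbeats 1000000 in
theorem linear_form_two_bound (α : ℝ) (hα : α ^ 3 - α ^ 2 - 1 = 0)
    (m n k : ℕ) (hm : 1 ≤ m) (hn : 1 ≤ n) (hk : 2 ≤ k)
    (h : narayana m = Nat.fib n * Nat.fib k) :
    0 < |Real.sqrt 5 * (α ^ 2 / (α ^ 3 + 2)) * α ^ m /
          ((Nat.fib n : ℝ) * ((1 + Real.sqrt 5) / 2) ^ k) - 1| ∧
    |Real.sqrt 5 * (α ^ 2 / (α ^ 3 + 2)) * α ^ m /
          ((Nat.fib n : ℝ) * ((1 + Real.sqrt 5) / 2) ^ k) - 1|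
        < 2.637 * ((1 + Real.sqrt 5) / 2) ^ (-(k : ℤ)) ∧
    Real.sqrt 5 * (α ^ 2 / (α ^ 3 + 2)) * α ^ m
        ≠ (Nat.fib n : ℝ) * ((1 + Real.sqrt 5) / 2) ^ k := by
  have hs5 : Real.sqrt 5 ^ 2 = 5 := Real.sq_sqrt (by norm_num)
  have hs5a : 2.23 < Real.sqrt 5 := by
    rw [show (2.23:ℝ) = Real.sqrt (2.23^2) from (Real.sqrt_sq (by norm_num)).symm]
    apply Real.sqrt_lt_sqrt (by norm_num)
    norm_num
  have hs5b : Real.sqrt 5 < 2.2361 := by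
    nlinarith [Real.sqrt_nonneg 5]
  set γ : ℝ := (1 + Real.sqrt 5) / 2 with hγdef
  set ψ : ℝ := (1 - Real.sqrt 5) / 2 with hψdef
  have hγ1 : 1.6 < γ := by rw [hγdef]; nlinarith
  have hγ2 : γ < 1.62 := by rw [hγdef]; nlinarith
  have hγpos : (0:ℝ) < γ := by linarith
  have hγψ : γ * ψ = -1 := by rw [hγdef, hψdef]; nlinarith
  have hψval : ψ = -γ⁻¹ := by
    field_simp
    linarith [hγψ]
  have hψabs : |ψ| = γ⁻¹ := by
    rw [hψval, abs_neg, abs_inv, abs_of_pos hγpos]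
  have hFn : (1:ℝ) ≤ (Nat.fib n : ℝ) := by
    exact_mod_cast Nat.fib_pos.mpr hn
  have hγk : (0:ℝ) < γ ^ k := pow_pos hγpos k
  have hY : (0:ℝ) < (Nat.fib n : ℝ) * γ ^ k := by positivity
  -- Binet
  have hbinet : Real.sqrt 5 * (Nat.fib k : ℝ) = γ ^ k - ψ ^ k := by
    have hcoe := Real.coe_fib_eq k
    have hgr : Real.goldenRatio = γ := rfl
    have hgc : Real.goldenConj = ψ := rfl
    rw [hgr, hgc] at hcoe
    rw [hcoe]
    have : Real.sqrt 5 ≠ 0 := by positivity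
    field_simp
  set E : ℝ := nerr α m with hE
  have hEsq : E ^ 2 ≤ 0.25 := err_sq_bound α hα m hm
  have hEabs : |E| ≤ 0.5 := by
    rw [abs_le]; constructor <;> nlinarith
  set X : ℝ := Real.sqrt 5 * (α ^ 2 / (α ^ 3 + 2)) * α ^ m with hX
  set Y : ℝ := (Nat.fib n : ℝ) * γ ^ k with hYdef
  have hcast : (narayana m : ℝ) = (Nat.fib n : ℝ) * (Nat.fib k : ℝ) := by
    exact_mod_cast h
  have hdefE : (narayana m : ℝ) = (α ^ 2 / (α ^ 3 + 2)) * α ^ m + E := by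
    rw [hE, nerr]; ring
  have hXY : X - Y = -(Real.sqrt 5 * E + (Nat.fib n : ℝ) * ψ ^ k) := by
    rw [hX, hYdef]
    linear_combination (-(Real.sqrt 5)) * hdefE + Real.sqrt 5 * hcast
      + (Nat.fib n : ℝ) * hbinet
  -- bound |X - Y|
  have hψk : |ψ ^ k| = (γ ^ k)⁻¹ := by rw [abs_pow, hψabs, inv_pow]
  have hinvk : (γ ^ k)⁻¹ ≤ 0.4 := by
    have h25 : (2.5:ℝ) ≤ γ ^ k := by
      have hg2 : (2.5:ℝ) ≤ γ ^ 2 := by nlinarith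
      have hmono : γ ^ 2 ≤ γ ^ k := pow_le_pow_right₀ (by linarith) hk
      linarith
    have h1 : (γ ^ k)⁻¹ ≤ (2.5:ℝ)⁻¹ := by
      apply inv_anti₀ (by norm_num) h25
    linarith [h1]
  have hsE : |Real.sqrt 5 * E| ≤ 1.119 := by
    rw [abs_mul, abs_of_pos (show (0:ℝ) < Real.sqrt 5 by linarith)]
    nlinarith [abs_nonneg E]
  have habsXY : |X - Y| ≤ 1.119 + (Nat.fib n : ℝ) * (γ ^ k)⁻¹ := by
    rw [hXY, abs_neg]
    calc |Real.sqrt 5 * E + (Nat.fib n : ℝ) * ψ ^ k|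
        ≤ |Real.sqrt 5 * E| + |(Nat.fib n : ℝ) * ψ ^ k| := abs_add_le _ _
      _ ≤ 1.119 + (Nat.fib n : ℝ) * (γ ^ k)⁻¹ := by
          rw [abs_mul ((Nat.fib n : ℝ)) (ψ ^ k), hψk,
            abs_of_nonneg (show (0:ℝ) ≤ (Nat.fib n : ℝ) by linarith)]
          linarith [hsE]
  have hne : X ≠ Y := key_ne α hα m n k hn
  have hzp : γ ^ (-(k:ℤ)) = (γ ^ k)⁻¹ := by
    rw [zpow_neg, zpow_natCast]
  have hratio : X / Y - 1 = (X - Y) / Y := by field_simp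
  have habsratio : |X / Y - 1| = |X - Y| / Y := by
    rw [hratio, abs_div, abs_of_pos hY]
  refine ⟨?_, ?_, hne⟩
  · rw [habsratio]
    apply div_pos _ hY
    rw [abs_pos]
    exact sub_ne_zero_of_ne hne
  · rw [habsratio, hzp, div_lt_iff₀ hY]
    have hexp : 2.637 * (γ ^ k)⁻¹ * (↑(Nat.fib n) * γ ^ k)
        = 2.637 * (Nat.fib n : ℝ) := by
      field_simp
    rw [hexp]
    have hprod : (Nat.fib n : ℝ) * (γ ^ k)⁻¹ ≤ (Nat.fib n : ℝ) * 0.4 :=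
      mul_le_mul_of_nonneg_left hinvk (by linarith)
    nlinarith [habsXY, hprod]
end
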